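/- arXiv:1409.4501 — 2 statements merged into one kernel-verified Lean document; each statement's English description precedes it below -/
import Mathlib

section
/- Let X ≥ 1 and 0 < r < s be real parameters. Suppose (a_k)_{k=1}^n is a finite non-increasing sequence of non-negative reals satisfying ∑_k a_k^s ≥ 1 and ∑_k a_k^r ≤ X. Then there exists an integer R with 1 ≤ R ≤ C(r,s)·X^{s/(s-r)} such that ∑_{k ≤ R} a_k^r ≥ c(r,s)·R^{(s-r)/(2s)}, where C(r,s) and c(r,s) are positive constants depending only on r and s. -/
set_option maxHeartbeats 1000000 in
/-- Energy pigeonholing lemma. -/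
theorem energy_pigeonholing (r s : ℝ) (hr : 0 < r) (hrs : r < s) :
    ∃ C c : ℝ, 0 < C ∧ 0 < c ∧
      ∀ (X : ℝ), 1 ≤ X →
      ∀ (n : ℕ) (a : ℕ → ℝ),
        (∀ k, 0 ≤ a k) →
        (∀ j k, 1 ≤ j → j ≤ k → a k ≤ a j) →
        (∀ k, n < k → a k = 0) →
        1 ≤ ∑ k ∈ Finset.Icc 1 n, a k ^ s →
        ∑ k ∈ Finset.Icc 1 n, a k ^ r ≤ X →
        ∃ R : ℕ, 1 ≤ R ∧ (R : ℝ) ≤ C * X ^ (s / (s - r)) ∧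
          c * (R : ℝ) ^ ((s - r) / (2 * s)) ≤ ∑ k ∈ Finset.Icc 1 R, a k ^ r := by
  have hs : 0 < s := hr.trans hrs
  have hsr : 0 < s - r := by linarith
  set q : ℝ := (s - r) / r with hq
  have hq0 : 0 < q := div_pos hsr hr
  set e : ℝ := s / (s - r) with he
  have he0 : 0 < e := div_pos hs hsr
  set p : ℝ := (s + r) / (2 * r) with hp
  have hp1 : 1 < p := by rw [hp, lt_div_iff₀ (by linarith)]; linarith
  have hsum : Summable (fun k : ℕ => (k : ℝ) ^ (-p)) :=
    Real.summable_nat_rpow.mpr (by linarith)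
  set Z : ℝ := ∑' k : ℕ, (k : ℝ) ^ (-p) with hZ
  have hZ1 : (1 : ℝ) ≤ Z := by
    have := Summable.le_tsum hsum 1 (fun j _ => Real.rpow_nonneg (Nat.cast_nonneg j) _)
    simpa using this
  have hZ0 : (0 : ℝ) < Z := by linarith
  set C' : ℝ := (2 : ℝ) ^ (r / (s - r)) with hC'
  have hC'1 : (1 : ℝ) ≤ C' := Real.one_le_rpow one_le_two (le_of_lt (div_pos hr hsr))
  set c : ℝ := (1 / (4 * Z)) ^ (r / s) with hc
  have hc0 : 0 < c := Real.rpow_pos_of_pos (by positivity) _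
  refine ⟨C' + 1, c, by linarith, hc0, ?_⟩
  intro X hX n a ha hmono hzero hS hXr
  have hX0 : (0 : ℝ) < X := lt_of_lt_of_le one_pos hX
  -- all partial sums of a^r are at most X
  have hA : ∀ m : ℕ, ∑ k ∈ Finset.Icc 1 m, a k ^ r ≤ X := by
    intro m
    calc ∑ k ∈ Finset.Icc 1 m, a k ^ r
        ≤ ∑ k ∈ Finset.Icc 1 (max m n), a k ^ r := by
          apply Finset.sum_le_sum_of_subset_of_nonneg
          · exact Finset.Icc_subset_Icc_right (le_max_left _ _)
          · intro i _ _; exact Real.rpow_nonneg (ha i) r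
      _ = ∑ k ∈ Finset.Icc 1 n, a k ^ r := by
          refine (Finset.sum_subset (Finset.Icc_subset_Icc_right (le_max_right _ _)) ?_).symm
          intro x hx hnx
          simp only [Finset.mem_Icc] at hx hnx
          have hnx' : n < x := by omega
          rw [hzero x hnx', Real.zero_rpow hr.ne']
      _ ≤ X := hXr
  -- monotonicity: k * a_k^r ≤ partial sum
  have hB : ∀ k : ℕ, 1 ≤ k → (k : ℝ) * a k ^ r ≤ ∑ j ∈ Finset.Icc 1 k, a j ^ r := by
    intro k hk
    have h1 : (k : ℝ) * a k ^ r = ∑ _j ∈ Finset.Icc 1 k, a k ^ r := by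
      rw [Finset.sum_const, Nat.card_Icc, nsmul_eq_mul]
      norm_num
    rw [h1]
    apply Finset.sum_le_sum
    intro j hj
    simp only [Finset.mem_Icc] at hj
    exact Real.rpow_le_rpow (ha k) (hmono j k hj.1 hj.2) hr.le
  set K : ℕ := ⌈C' * X ^ e⌉₊ with hK
  have hXe1 : (1 : ℝ) ≤ X ^ e := Real.one_le_rpow hX he0.le
  have hKlb : C' * X ^ e ≤ (K : ℝ) := Nat.le_ceil _
  have hCXe1 : (1 : ℝ) ≤ C' * X ^ e := by nlinarith
  have hK1 : 1 ≤ K := by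
    have : (1 : ℝ) ≤ (K : ℝ) := le_trans hCXe1 hKlb
    exact_mod_cast this
  have hK0R : (0 : ℝ) < (K : ℝ) := by exact_mod_cast Nat.pos_of_ne_zero (by omega)
  have hKub : (K : ℝ) ≤ (C' + 1) * X ^ e := by
    have h := Nat.ceil_lt_add_one (by positivity : (0:ℝ) ≤ C' * X ^ e)
    have : (K : ℝ) < C' * X ^ e + 1 := h
    nlinarith
  set N : ℕ := max n K with hN
  have hSN : 1 ≤ ∑ k ∈ Finset.Icc 1 N, a k ^ s := by
    have heq : ∑ k ∈ Finset.Icc 1 N, a k ^ s = ∑ k ∈ Finset.Icc 1 n, a k ^ s := by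
      refine (Finset.sum_subset (Finset.Icc_subset_Icc_right (le_max_left _ _)) ?_).symm
      intro x hx hnx
      simp only [Finset.mem_Icc] at hx hnx
      have hnx' : n < x := by omega
      rw [hzero x hnx', Real.zero_rpow hs.ne']
    rw [heq]; exact hS
  -- tail bound
  have hCq : C' ^ q = 2 := by
    rw [hC', ← Real.rpow_mul (by norm_num : (0:ℝ) ≤ 2),
      show r / (s - r) * q = 1 by rw [hq]; field_simp, Real.rpow_one]
  have hXeq : (X ^ e) ^ q = X ^ q * X := by
    rw [← Real.rpow_mul hX0.le, show e * q = q + 1 by rw [he, hq]; field_simp; ring,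
      Real.rpow_add_one hX0.ne' q]
  have hkey : (X / (C' * X ^ e)) ^ q * X = 1 / 2 := by
    rw [Real.div_rpow hX0.le (by positivity), Real.mul_rpow (by positivity) (by positivity),
      hCq, hXeq]
    have hXq : (0:ℝ) < X ^ q := Real.rpow_pos_of_pos hX0 q
    field_simp
  have htail : ∑ k ∈ Finset.Ioc K N, a k ^ s ≤ 1 / 2 := by
    have hterm : ∀ k ∈ Finset.Ioc K N, a k ^ s ≤ (X / (K:ℝ)) ^ q * a k ^ r := by
      intro k hk
      simp only [Finset.mem_Ioc] at hk
      have hk1 : 1 ≤ k := by omega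
      have hkK : (K : ℝ) ≤ (k : ℝ) := by exact_mod_cast hk.1.le
      have har : a k ^ r ≤ X / (K : ℝ) := by
        rw [le_div_iff₀ hK0R]
        have h1 : (K : ℝ) * a k ^ r ≤ (k : ℝ) * a k ^ r :=
          mul_le_mul_of_nonneg_right hkK (Real.rpow_nonneg (ha k) r)
        have h2 := le_trans (hB k hk1) (hA k)
        linarith [h1, (hB k hk1)]
      have hsplit : a k ^ s = a k ^ r * (a k ^ r) ^ q := by
        rw [← Real.rpow_mul (ha k), show r * q = s - r by rw [hq]; field_simp,
          ← Real.rpow_add' (ha k) (by intro h0; linarith : r + (s - r) ≠ 0)]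
        norm_num
      rw [hsplit, mul_comm]
      apply mul_le_mul_of_nonneg_right _ (Real.rpow_nonneg (ha k) r)
      exact Real.rpow_le_rpow (Real.rpow_nonneg (ha k) r) har hq0.le
    calc ∑ k ∈ Finset.Ioc K N, a k ^ s
        ≤ ∑ k ∈ Finset.Ioc K N, (X / (K:ℝ)) ^ q * a k ^ r := Finset.sum_le_sum hterm
      _ = (X / (K:ℝ)) ^ q * ∑ k ∈ Finset.Ioc K N, a k ^ r := (Finset.mul_sum _ _ _).symm
      _ ≤ (X / (K:ℝ)) ^ q * X := by
          apply mul_le_mul_of_nonneg_left _ (Real.rpow_nonneg (by positivity) q)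
          calc ∑ k ∈ Finset.Ioc K N, a k ^ r
              ≤ ∑ k ∈ Finset.Icc 1 N, a k ^ r := by
                apply Finset.sum_le_sum_of_subset_of_nonneg
                · intro x hx
                  simp only [Finset.mem_Ioc] at hx
                  simp only [Finset.mem_Icc]
                  omega
                · intro i _ _; exact Real.rpow_nonneg (ha i) r
            _ ≤ X := hA N
      _ ≤ (X / (C' * X ^ e)) ^ q * X := by
          apply mul_le_mul_of_nonneg_right _ hX0.le
          apply Real.rpow_le_rpow (by positivity) _ hq0.le
          rw [div_le_div_iff₀ hK0R (by positivity)]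
          nlinarith
      _ = 1 / 2 := hkey
  have hhead : 1 / 2 ≤ ∑ k ∈ Finset.Icc 1 K, a k ^ s := by
    have hsplit : ∑ k ∈ Finset.Icc 1 K, a k ^ s + ∑ k ∈ Finset.Ioc K N, a k ^ s
        = ∑ k ∈ Finset.Icc 1 N, a k ^ s := by
      rw [show Finset.Icc 1 K = Finset.Ioc 0 K from Finset.Icc_add_one_left_eq_Ioc 0 K,
        show Finset.Icc 1 N = Finset.Ioc 0 N from Finset.Icc_add_one_left_eq_Ioc 0 N]
      exact Finset.sum_Ioc_consecutive _ (Nat.zero_le K) (le_max_right n K)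
    linarith
  -- now the pigeonhole by contradiction
  by_contra hcon
  push_neg at hcon
  have hterm : ∀ k ∈ Finset.Icc 1 K, a k ^ s ≤ 1 / (4 * Z) * (k : ℝ) ^ (-p) := by
    intro k hk
    simp only [Finset.mem_Icc] at hk
    have hk1 : 1 ≤ k := hk.1
    have hkpos : (0 : ℝ) < (k : ℝ) := by exact_mod_cast hk1
    have hkK : (k : ℝ) ≤ (K : ℝ) := by exact_mod_cast hk.2
    have hklt := hcon k hk1 (le_trans hkK hKub)
    have h3 : (k : ℝ) * a k ^ r < c * (k : ℝ) ^ ((s - r) / (2 * s)) :=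
      lt_of_le_of_lt (hB k hk1) hklt
    have h4 : a k ^ r ≤ c * (k : ℝ) ^ ((s - r) / (2 * s) - 1) := by
      rw [Real.rpow_sub hkpos, Real.rpow_one, ← mul_div_assoc, le_div_iff₀ hkpos]
      nlinarith
    have h5 : a k ^ s ≤ (c * (k : ℝ) ^ ((s - r) / (2 * s) - 1)) ^ (s / r) := by
      have heq : a k ^ s = (a k ^ r) ^ (s / r) := by
        rw [← Real.rpow_mul (ha k), show r * (s / r) = s by field_simp]
      rw [heq]
      exact Real.rpow_le_rpow (Real.rpow_nonneg (ha k) r) h4 (by positivity)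
    refine le_trans h5 (le_of_eq ?_)
    rw [Real.mul_rpow hc0.le (Real.rpow_nonneg hkpos.le _),
      ← Real.rpow_mul hkpos.le]
    congr 1
    · rw [hc, ← Real.rpow_mul (by positivity), show r / s * (s / r) = 1 by field_simp,
        Real.rpow_one]
    · congr 1
      rw [hp]
      field_simp
      ring
  have hfinal : ∑ k ∈ Finset.Icc 1 K, a k ^ s ≤ 1 / (4 * Z) * Z := by
    calc ∑ k ∈ Finset.Icc 1 K, a k ^ s
        ≤ ∑ k ∈ Finset.Icc 1 K, 1 / (4 * Z) * (k : ℝ) ^ (-p) := Finset.sum_le_sum hterm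
      _ = 1 / (4 * Z) * ∑ k ∈ Finset.Icc 1 K, (k : ℝ) ^ (-p) := (Finset.mul_sum _ _ _).symm
      _ ≤ 1 / (4 * Z) * Z := by
          apply mul_le_mul_of_nonneg_left _ (by positivity)
          exact Summable.sum_le_tsum _ (fun i _ => Real.rpow_nonneg (Nat.cast_nonneg i) _) hsum
  have : 1 / (4 * Z) * Z = 1 / 4 := by field_simp
  linarith
end

section
/- Let M ≥ 1 be an integer and p ≥ 1. There is a constant C(p) such that for every function f : ℤ → ℂ supported on {1,…,M}, one has ∑_{r ∈ ℤ/Mℤ} |f̂(r/M)|^p ≤ C(p) · M · ∫_{𝕋} |f̂(θ)|^p dθ, where f̂(θ) = ∑_{n ∈ ℤ} f(n) e(nθ). -/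
open scoped BigOperators

/-- The Fourier transform f̂(θ) = ∑_{n ∈ ℤ} f(n) e(nθ). -/
noncomputable def fourierZ (f : ℤ → ℂ) (θ : ℝ) : ℂ :=
  ∑' n : ℤ, f n * Complex.exp (2 * Real.pi * Complex.I * n * θ)

set_option maxHeartbeats 1600000

noncomputable def eC (x : ℝ) : ℂ := Complex.exp (2 * Real.pi * Complex.I * x)

lemma eC_add (x y : ℝ) : eC (x + y) = eC x * eC y := by
  rw [eC, eC, eC, ← Complex.exp_add]; congr 1; push_cast; ring

lemma eC_int_mul (k : ℤ) (x : ℝ) : eC (k * x) = eC x ^ k := by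
  rw [eC, eC, ← Complex.exp_int_mul]; congr 1; push_cast; ring

lemma eC_nat_mul (k : ℕ) (x : ℝ) : eC (k * x) = eC x ^ k := by
  have := eC_int_mul (k : ℤ) x; simpa using this

lemma eC_int (k : ℤ) : eC k = 1 := by
  rw [eC]
  have : ((2:ℂ) * Real.pi * Complex.I * (k:ℝ)) = (k:ℤ) * (2 * Real.pi * Complex.I) := by
    push_cast; ring
  rw [this, Complex.exp_int_mul_two_pi_mul_I]

lemma eC_zero : eC 0 = 1 := by simpa using eC_int 0

lemma norm_eC (x : ℝ) : ‖eC x‖ = 1 := by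
  rw [eC, Complex.norm_exp]
  have : (2 * Real.pi * Complex.I * x).re = 0 := by simp [Complex.mul_re]
  rw [this, Real.exp_zero]

lemma eC_ne_one {x : ℝ} (h : ∀ m : ℤ, x ≠ m) : eC x ≠ 1 := by
  rw [eC, Ne, Complex.exp_eq_one_iff]
  rintro ⟨m, hm⟩
  apply h m
  have h2 : (2 * ↑Real.pi * Complex.I : ℂ) ≠ 0 := Complex.two_pi_I_ne_zero
  have h3 : ((x:ℂ) - m) * (2 * ↑Real.pi * Complex.I) = 0 := by linear_combination hm
  rcases mul_eq_zero.1 h3 with h4 | h4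
  · have : (x:ℂ) = (m:ℂ) := sub_eq_zero.1 h4
    exact_mod_cast this
  · exact absurd h4 h2

lemma fourierZ_eq_sum (M : ℕ) (f : ℤ → ℂ)
    (hf : ∀ n ∉ Finset.Icc (1:ℤ) (M:ℤ), f n = 0) (θ : ℝ) :
    fourierZ f θ = ∑ n ∈ Finset.Icc (1:ℤ) (M:ℤ), f n * eC (n * θ) := by
  rw [fourierZ, tsum_eq_sum (s := Finset.Icc (1:ℤ) (M:ℤ))
    (fun n hn => by rw [hf n hn, zero_mul])]
  refine Finset.sum_congr rfl fun n _ => ?_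
  congr 1
  rw [eC]; congr 1; push_cast; ring

noncomputable def KK (M : ℕ) (u : ℝ) : ℂ :=
  (∑ i ∈ Finset.Icc (1:ℤ) (M:ℤ), eC (i * u)) *
    (∑ j ∈ Finset.Icc (1-(M:ℤ)) ((M:ℤ)-1), eC (j * u))

lemma ortho (M : ℕ) (hM : 1 ≤ M) (k : ℤ) (hk : |k| < 2*M) :
    ∑ s ∈ Finset.range (2*M), eC ((k:ℝ) / (2*(M:ℝ))) ^ s
      = if k = 0 then ((2*M : ℕ) : ℂ) else 0 := by
  rcases eq_or_ne k 0 with rfl | hk0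
  · simp [eC_zero]
  · rw [if_neg hk0]
    have hM0 : (0:ℝ) < 2*(M:ℝ) := by positivity
    have hz : eC ((k:ℝ)/(2*(M:ℝ))) ≠ 1 := by
      apply eC_ne_one
      intro m hm
      rw [div_eq_iff hM0.ne'] at hm
      have hkz : k = m * (2*(M:ℤ)) := by exact_mod_cast hm
      rcases eq_or_ne m 0 with rfl | m0
      · simp at hkz; exact hk0 hkz
      · have h1 : (1:ℤ) ≤ |m| := Int.one_le_abs m0
        have h2 : |k| = |m| * (2*(M:ℤ)) := by
          rw [hkz, abs_mul, abs_of_nonneg (by positivity : (0:ℤ) ≤ 2*(M:ℤ))]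
        nlinarith [hk, h2, h1]
    rw [geom_sum_eq hz]
    have hzM : eC ((k:ℝ)/(2*(M:ℝ))) ^ (2*M) = 1 := by
      rw [← eC_nat_mul]
      have h3 : ((2*M : ℕ) : ℝ) * ((k:ℝ)/(2*(M:ℝ))) = ((k:ℤ):ℝ) := by
        push_cast; field_simp
      rw [h3, eC_int]
    rw [hzM]; simp

noncomputable def dz (x : ℝ) : ℝ := |x - round x|

lemma dz_nonneg (x : ℝ) : 0 ≤ dz x := abs_nonneg _
lemma dz_le_half (x : ℝ) : dz x ≤ 1/2 := abs_sub_round x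

lemma norm_eC_sub_one_ge (u : ℝ) : 4 * dz u ≤ ‖eC u - 1‖ := by
  set t : ℝ := u - round u with ht
  have h1 : eC u = eC t := by
    have : u = t + (round u : ℝ) := by ring
    rw [this, eC_add, eC_int, mul_one]
  have h2 : eC t - 1 = eC (t/2) * (eC (t/2) - eC (-(t/2))) := by
    rw [mul_sub, ← eC_add, ← eC_add]
    norm_num [eC_zero]
  have h3 : eC (t/2) - eC (-(t/2)) = 2 * Real.sin (Real.pi * t) * Complex.I := by
    have e1 : eC (t/2) = Complex.exp ((Real.pi * t : ℝ) * Complex.I) := by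
      rw [eC]; congr 1; push_cast; ring
    have e2 : eC (-(t/2)) = Complex.exp ((-(Real.pi * t) : ℝ) * Complex.I) := by
      rw [eC]; congr 1; push_cast; ring
    rw [e1, e2, Complex.exp_mul_I, Complex.exp_mul_I]
    push_cast
    rw [Complex.cos_neg, Complex.sin_neg]
    ring
  have h4 : ‖eC u - 1‖ = 2 * |Real.sin (Real.pi * t)| := by
    rw [h1, h2, norm_mul, norm_eC, one_mul, h3]
    simp [norm_mul, Complex.norm_real, Real.norm_eq_abs, Complex.norm_I]
    rw [← Complex.ofReal_mul, ← Complex.ofReal_sin, Complex.norm_real, Real.norm_eq_abs]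
  rw [h4]
  have h5 : |Real.pi * t| ≤ Real.pi / 2 := by
    rw [abs_mul, abs_of_nonneg Real.pi_pos.le]
    have := abs_sub_round u
    rw [← ht] at this
    nlinarith [Real.pi_pos]
  have h6 := Real.mul_abs_le_abs_sin h5
  have h7 : 2 / Real.pi * |Real.pi * t| = 2 * |t| := by
    rw [abs_mul, abs_of_nonneg Real.pi_pos.le]
    field_simp
  rw [h7] at h6
  have : dz u = |t| := rfl
  rw [this]
  linarith

lemma geom_Icc (z : ℂ) (hz : z ≠ 0) (a : ℤ) :
    ∀ b : ℤ, a - 1 ≤ b →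
      (z - 1) * ∑ j ∈ Finset.Icc a b, z ^ j = z ^ (b+1) - z ^ a := by
  refine Int.le_induction ?_ ?_
  · rw [Finset.Icc_eq_empty (by omega)]
    simp
  · intro b hb ih
    have hins : Finset.Icc a (b+1) = insert (b+1) (Finset.Icc a b) := by
      ext k
      simp only [Finset.mem_Icc, Finset.mem_insert]
      omega
    rw [hins, Finset.sum_insert (by simp [Finset.mem_Icc])]
    rw [mul_add, ih]
    rw [zpow_add_one₀ hz (b+1)]
    ring

lemma KK_norm_le (M : ℕ) (hM : 1 ≤ M) (u : ℝ) : ‖KK M u‖ ≤ 2*(M:ℝ)^2 := by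
  rw [KK, norm_mul]
  have h1 : ‖∑ i ∈ Finset.Icc (1:ℤ) (M:ℤ), eC (i * u)‖ ≤ (M:ℝ) := by
    refine le_trans (norm_sum_le _ _) ?_
    simp only [norm_eC]
    rw [Finset.sum_const, Int.card_Icc]
    simp
  have h2 : ‖∑ j ∈ Finset.Icc (1-(M:ℤ)) ((M:ℤ)-1), eC (j * u)‖ ≤ 2*(M:ℝ) := by
    refine le_trans (norm_sum_le _ _) ?_
    simp only [norm_eC]
    rw [Finset.sum_const, Int.card_Icc]
    have : ((M:ℤ) - 1 + 1 - (1 - (M:ℤ))).toNat = 2*M - 1 := by omega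
    rw [this, nsmul_eq_mul, mul_one]
    push_cast
    have : (1:ℝ) ≤ (M:ℝ) := by exact_mod_cast hM
    push_cast [Nat.cast_sub (by omega : 1 ≤ 2*M)]
    linarith
  calc ‖_‖ * ‖_‖ ≤ (M:ℝ) * (2*(M:ℝ)) :=
        mul_le_mul h1 h2 (norm_nonneg _) (by positivity)
    _ = 2*(M:ℝ)^2 := by ring

lemma KK_norm_le' (M : ℕ) (hM : 1 ≤ M) (u : ℝ) (hu : 0 < dz u) :
    ‖KK M u‖ ≤ 1 / (4 * dz u ^ 2) := by
  have hz0 : eC u ≠ 0 := Complex.exp_ne_zero _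
  have hd : 4 * dz u ≤ ‖eC u - 1‖ := norm_eC_sub_one_ge u
  have hne : (0:ℝ) < ‖eC u - 1‖ := lt_of_lt_of_le (by linarith) hd
  have hbound : ∀ a b : ℤ, a - 1 ≤ b →
      ‖∑ j ∈ Finset.Icc a b, eC (j * u)‖ ≤ 2 / ‖eC u - 1‖ := by
    intro a b hab
    have hsum : ∑ j ∈ Finset.Icc a b, eC (j * u) = ∑ j ∈ Finset.Icc a b, eC u ^ j :=
      Finset.sum_congr rfl fun j _ => eC_int_mul j u
    have hge := geom_Icc (eC u) hz0 a b hab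
    rw [← hsum] at hge
    have hz1 : eC u - 1 ≠ 0 := norm_pos_iff.mp hne
    have heq : ∑ j ∈ Finset.Icc a b, eC (j * u)
        = (eC u ^ (b+1) - eC u ^ a) / (eC u - 1) := by
      rw [eq_div_iff hz1]
      linear_combination hge
    rw [heq, norm_div]
    have hnum : ‖eC u ^ (b+1) - eC u ^ a‖ ≤ 2 := by
      refine (norm_sub_le _ _).trans ?_
      rw [norm_zpow, norm_zpow, norm_eC]
      norm_num
    gcongr
  have hA := hbound 1 (M:ℤ) (by omega)
  have hB := hbound (1-(M:ℤ)) ((M:ℤ)-1) (by omega)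
  rw [KK, norm_mul]
  have step : ‖_‖ * ‖_‖ ≤ (2/‖eC u - 1‖) * (2/‖eC u - 1‖) :=
    mul_le_mul hA hB (norm_nonneg _) (by positivity)
  refine step.trans ?_
  have h16 : 16 * dz u ^ 2 ≤ ‖eC u - 1‖^2 := by nlinarith
  rw [div_mul_div_comm]
  rw [div_le_div_iff₀ (by positivity) (by positivity)]
  nlinarith

lemma sampling (M : ℕ) (hM : 1 ≤ M) (f : ℤ → ℂ)
    (hf : ∀ n ∉ Finset.Icc (1:ℤ) (M:ℤ), f n = 0) (x θ : ℝ) :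
    (2 * (M:ℂ)^2) * fourierZ f x
      = ∑ s ∈ Finset.range (2*M),
          fourierZ f (θ + s/(2*(M:ℝ))) * KK M (x - (θ + s/(2*(M:ℝ)))) := by
  have hM0 : (0:ℝ) < (M:ℝ) := by exact_mod_cast hM
  set I1 := Finset.Icc (1:ℤ) (M:ℤ) with hI1
  set J := Finset.Icc (1-(M:ℤ)) ((M:ℤ)-1) with hJ
  have key : ∀ s ∈ Finset.range (2*M),
      fourierZ f (θ + s/(2*(M:ℝ))) * KK M (x - (θ + s/(2*(M:ℝ))))
        = ∑ n ∈ I1, ∑ i ∈ I1, ∑ j ∈ J,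
            (f n * eC (((i+j:ℤ):ℝ) * x) * eC (((n-i-j:ℤ):ℝ) * θ))
              * eC (((n-i-j:ℤ):ℝ) / (2*(M:ℝ))) ^ s := by
    intro s _
    rw [fourierZ_eq_sum M f hf, KK]
    rw [Finset.sum_mul_sum, Finset.sum_mul]
    refine Finset.sum_congr rfl fun n _ => ?_
    rw [Finset.mul_sum]
    refine Finset.sum_congr rfl fun i _ => ?_
    rw [Finset.mul_sum]
    refine Finset.sum_congr rfl fun j _ => ?_
    have L : f n * eC ((n:ℝ) * (θ + s/(2*(M:ℝ)))) * (eC ((i:ℝ) * (x - (θ + s/(2*(M:ℝ)))))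
          * eC ((j:ℝ) * (x - (θ + s/(2*(M:ℝ))))))
        = f n * eC ((n:ℝ) * (θ + s/(2*(M:ℝ))) + ((i:ℝ) * (x - (θ + s/(2*(M:ℝ))))
            + (j:ℝ) * (x - (θ + s/(2*(M:ℝ)))))) := by
      rw [eC_add, eC_add]; ring
    have R : (f n * eC (((i+j:ℤ):ℝ) * x) * eC (((n-i-j:ℤ):ℝ) * θ))
          * eC (((n-i-j:ℤ):ℝ) / (2*(M:ℝ))) ^ s
        = f n * eC (((i+j:ℤ):ℝ) * x + (((n-i-j:ℤ):ℝ) * θ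
            + (s:ℝ) * (((n-i-j:ℤ):ℝ) / (2*(M:ℝ))))) := by
      rw [eC_add, eC_add, eC_nat_mul]
      ring
    rw [L, R]
    congr 2
    push_cast
    field_simp
    ring
  rw [Finset.sum_congr rfl key]
  rw [Finset.sum_comm]
  have key2 : ∀ n ∈ I1,
      (∑ s ∈ Finset.range (2*M), ∑ i ∈ I1, ∑ j ∈ J,
        (f n * eC (((i+j:ℤ):ℝ) * x) * eC (((n-i-j:ℤ):ℝ) * θ))
          * eC (((n-i-j:ℤ):ℝ) / (2*(M:ℝ))) ^ s)
        = (M:ℂ) * (2*(M:ℂ)) * (f n * eC ((n:ℝ) * x)) := by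
    intro n hn
    rw [Finset.sum_comm]
    have key3 : ∀ i ∈ I1,
        (∑ s ∈ Finset.range (2*M), ∑ j ∈ J,
          (f n * eC (((i+j:ℤ):ℝ) * x) * eC (((n-i-j:ℤ):ℝ) * θ))
            * eC (((n-i-j:ℤ):ℝ) / (2*(M:ℝ))) ^ s)
          = (2*(M:ℂ)) * (f n * eC ((n:ℝ) * x)) := by
      intro i hi
      rw [Finset.sum_comm]
      have key4 : ∀ j ∈ J,
          (∑ s ∈ Finset.range (2*M),
            (f n * eC (((i+j:ℤ):ℝ) * x) * eC (((n-i-j:ℤ):ℝ) * θ))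
              * eC (((n-i-j:ℤ):ℝ) / (2*(M:ℝ))) ^ s)
            = if j = n - i then (2*(M:ℂ)) * (f n * eC ((n:ℝ) * x)) else 0 := by
        intro j hj
        rw [← Finset.mul_sum]
        simp only [hI1, Finset.mem_Icc] at hn hi
        simp only [hJ, Finset.mem_Icc] at hj
        rw [ortho M hM (n-i-j) (abs_lt.2 ⟨by omega, by omega⟩)]
        by_cases hji : j = n - i
        · rw [if_pos (by omega), if_pos hji]
          have h1 : n - i - j = 0 := by omega
          have h2 : i + j = n := by omega
          rw [h1, h2]
          push_cast
          rw [zero_mul, eC_zero]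
          ring
        · rw [if_neg (by omega), if_neg hji, mul_zero]
      rw [Finset.sum_congr rfl key4, Finset.sum_ite_eq' J (n-i)
        (fun _ => (2*(M:ℂ)) * (f n * eC ((n:ℝ) * x)))]
      rw [if_pos]
      simp only [hI1, Finset.mem_Icc] at hn hi
      simp only [hJ, Finset.mem_Icc]
      omega
    rw [Finset.sum_congr rfl key3, Finset.sum_const, hI1, Int.card_Icc]
    have hcard : ((M:ℤ) + 1 - 1).toNat = M := by omega
    rw [hcard, nsmul_eq_mul]
    push_cast
    ring
  rw [Finset.sum_congr rfl key2, fourierZ_eq_sum M f hf, Finset.mul_sum]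
  refine Finset.sum_congr rfl fun n _ => ?_
  ring

lemma sum_inv_sq (n : ℕ) : ∑ k ∈ Finset.range n, (1:ℝ)/((k:ℝ)+1)^2 ≤ 2 := by
  have H : ∀ n : ℕ, ∑ k ∈ Finset.range n, (1:ℝ)/((k:ℝ)+1)^2 ≤ 2 - 2/((n:ℝ)+1) := by
    intro n
    induction n with
    | zero => norm_num
    | succ n ih =>
      rw [Finset.sum_range_succ]
      have hn0 : (0:ℝ) < (n:ℝ)+1 := by positivity
      have hn1 : (0:ℝ) < (n:ℝ)+2 := by positivity
      have h1 : (1:ℝ)/((n:ℝ)+1)^2 ≤ 2/((n:ℝ)+1) - 2/((n:ℝ)+1+1) := by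
        rw [div_sub_div _ _ (by positivity) (by positivity)]
        rw [div_le_div_iff₀ (by positivity) (by positivity)]
        nlinarith [Nat.cast_nonneg (α := ℝ) n]
      push_cast
      linarith
  have h2 : (0:ℝ) ≤ 2/((n:ℝ)+1) := by positivity
  linarith [H n]

lemma fiber_card (N : ℕ) (hN : 1 ≤ N) (y : ℝ) (k₀ : ℕ) :
    ((Finset.range N).filter
      (fun s : ℕ => ⌊2*(N:ℝ) * dz (y + s/N)⌋₊ = k₀)).card ≤ 2 := by
  classical
  have hNR : (0:ℝ) < N := by exact_mod_cast hN
  have hinj : Set.InjOn (fun s : ℕ => decide ((y + s/N) - round (y + s/N) < 0))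
      ((Finset.range N).filter
        (fun s : ℕ => ⌊2*(N:ℝ) * dz (y + s/N)⌋₊ = k₀) : Finset ℕ) := by
    intro s hs t ht hbe
    simp only [Finset.coe_filter, Set.mem_setOf_eq, Finset.mem_range] at hs ht
    obtain ⟨hsN, hks⟩ := hs
    obtain ⟨htN, hkt⟩ := ht
    set xs := y + (s:ℝ)/N with hxs
    set xt := y + (t:ℝ)/N with hxt
    have hnn : ∀ x : ℝ, (0:ℝ) ≤ 2*(N:ℝ) * dz x := fun x => by
      have := dz_nonneg x; positivity
    have hs1 : (k₀:ℝ) ≤ 2*(N:ℝ) * dz xs := by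
      rw [← hks]; exact Nat.floor_le (hnn xs)
    have hs2 : 2*(N:ℝ) * dz xs < (k₀:ℝ) + 1 := by
      have := Nat.lt_floor_add_one (2*(N:ℝ) * dz xs)
      rw [hks] at this; exact_mod_cast this
    have ht1 : (k₀:ℝ) ≤ 2*(N:ℝ) * dz xt := by
      rw [← hkt]; exact Nat.floor_le (hnn xt)
    have ht2 : 2*(N:ℝ) * dz xt < (k₀:ℝ) + 1 := by
      have := Nat.lt_floor_add_one (2*(N:ℝ) * dz xt)
      rw [hkt] at this; exact_mod_cast this
    have hdd : |dz xs - dz xt| < 1/(2*(N:ℝ)) := by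
      rw [abs_lt]
      constructor
      · have h9 : dz xt - dz xs < 1/(2*(N:ℝ)) := by
          rw [lt_div_iff₀ (by positivity : (0:ℝ) < 2*(N:ℝ))]
          nlinarith
        linarith
      · have h9 : dz xs - dz xt < 1/(2*(N:ℝ)) := by
          rw [lt_div_iff₀ (by positivity : (0:ℝ) < 2*(N:ℝ))]
          nlinarith
        exact h9
    have hsame : ((xs - round xs < 0) ↔ (xt - round xt < 0)) := by
      simpa [decide_eq_decide] using hbe
    have key : |(xs - round xs) - (xt - round xt)| < 1/(2*(N:ℝ)) := by
      by_cases hpos : xs - round xs < 0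
      · have hpos' : xt - round xt < 0 := hsame.1 hpos
        have e1 : dz xs = -(xs - round xs) := by rw [dz, abs_of_neg hpos]
        have e2 : dz xt = -(xt - round xt) := by rw [dz, abs_of_neg hpos']
        have : (xs - round xs) - (xt - round xt) = -(dz xs - dz xt) := by
          rw [e1, e2]; ring
        rw [this, abs_neg]
        exact hdd
      · have hpos' : ¬ (xt - round xt < 0) := fun h => hpos (hsame.2 h)
        have e1 : dz xs = xs - round xs := by rw [dz, abs_of_nonneg (not_lt.1 hpos)]
        have e2 : dz xt = xt - round xt := by rw [dz, abs_of_nonneg (not_lt.1 hpos')]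
        rw [← e1, ← e2]
        exact hdd
    set m : ℤ := round xs - round xt with hm
    have hdiff : (xs - round xs) - (xt - round xt) = ((s:ℝ) - t)/N - m := by
      rw [hxs, hxt, hm]
      push_cast
      ring
    have key2 : |((s:ℝ) - t) - m*N| < 1/2 := by
      have heq : ((s:ℝ) - t) - m*N = (((s:ℝ) - t)/N - m) * N := by
        field_simp
      rw [heq, abs_mul, abs_of_pos hNR]
      calc |((s:ℝ)-t)/N - m| * N < (1/(2*(N:ℝ))) * N := by
            apply mul_lt_mul_of_pos_right ?_ hNR
            rw [← hdiff]; exact key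
        _ = 1/2 := by field_simp
    have key3 : ((s:ℤ) - t - m*N) = 0 := by
      have hcast : ((((s:ℤ) - t - m*N : ℤ)):ℝ) = ((s:ℝ) - t) - m*N := by
        push_cast; ring
      have hc : |((((s:ℤ) - t - m*N : ℤ)):ℝ)| < 1/2 := by rw [hcast]; exact key2
      rw [← Int.cast_abs] at hc
      have h6 : ((|(s:ℤ) - t - m*N| : ℤ) : ℝ) < 1 :=
        lt_of_lt_of_le hc (by norm_num)
      have h5 : |(s:ℤ) - t - m*N| < 1 := by exact_mod_cast h6
      rcases abs_lt.1 h5 with ⟨ha, hb⟩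
      omega
    have hNZ : (1:ℤ) ≤ (N:ℤ) := by exact_mod_cast hN
    have hsZ : (s:ℤ) < (N:ℤ) := by exact_mod_cast hsN
    have htZ : (t:ℤ) < (N:ℤ) := by exact_mod_cast htN
    have hs0 : (0:ℤ) ≤ (s:ℤ) := Int.natCast_nonneg s
    have ht0 : (0:ℤ) ≤ (t:ℤ) := Int.natCast_nonneg t
    have h2 : (s:ℤ) - t = m*N := by linarith [key3]
    have hm0 : m = 0 := by
      rcases lt_trichotomy m 0 with h | h | h
      · exfalso
        have h3 : (m:ℤ)*N ≤ -N := by nlinarith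
        linarith
      · exact h
      · exfalso
        have h3 : (N:ℤ) ≤ m*N := by nlinarith
        linarith
    rw [hm0, zero_mul] at h2
    have h7 : (s:ℤ) = (t:ℤ) := by linarith
    exact_mod_cast h7
  have := Finset.card_le_card_of_injOn _ (fun _ _ => Finset.mem_univ _) hinj
  simpa using this

lemma grid_sum (M N : ℕ) (hM : 1 ≤ M) (hN1 : 1 ≤ N) (hN2 : N ≤ 2*M) (y : ℝ) :
    ∑ s ∈ Finset.range N, ‖KK M (y + s/N)‖ ≤ 20 * (M:ℝ)^2 := by
  classical
  have hNR : (0:ℝ) < N := by exact_mod_cast hN1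
  have hMR : (0:ℝ) < M := by exact_mod_cast hM
  set kf : ℕ → ℕ := fun s => ⌊2*(N:ℝ) * dz (y + s/N)⌋₊ with hkf
  set h : ℕ → ℝ := fun k => if k = 0 then 2*(M:ℝ)^2 else (N:ℝ)^2/(k:ℝ)^2 with hh
  have hnonneg : ∀ k, 0 ≤ h k := by
    intro k
    rw [hh]
    dsimp only
    split <;> positivity
  have hpt : ∀ s ∈ Finset.range N, ‖KK M (y + s/N)‖ ≤ h (kf s) := by
    intro s _
    by_cases h0 : kf s = 0
    · rw [h0]
      simpa [hh] using KK_norm_le M hM (y + s/N)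
    · rw [hh]
      simp only [if_neg h0]
      have hk1 : 1 ≤ kf s := Nat.one_le_iff_ne_zero.2 h0
      have hflo : (kf s : ℝ) ≤ 2*(N:ℝ) * dz (y + s/N) :=
        Nat.floor_le (by have := dz_nonneg (y + s/N); positivity)
      have hdzpos : 0 < dz (y + s/N) := by
        by_contra hc
        push_neg at hc
        have hz : dz (y + s/N) = 0 := le_antisymm hc (dz_nonneg _)
        rw [hz] at hflo
        simp at hflo
        have : (1:ℝ) ≤ (kf s : ℝ) := by exact_mod_cast hk1
        linarith
      refine (KK_norm_le' M hM _ hdzpos).trans ?_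
      rw [div_le_div_iff₀ (by positivity) (by positivity)]
      have hk1' : (1:ℝ) ≤ (kf s : ℝ) := by exact_mod_cast hk1
      nlinarith
  have hsum := Finset.sum_le_sum hpt
  have hcomp : ∑ s ∈ Finset.range N, h (kf s)
      = ∑ k ∈ (Finset.range N).image kf,
          ((Finset.range N).filter (fun s => kf s = k)).card • h k :=
    Finset.sum_comp h kf
  have himg : (Finset.range N).image kf ⊆ Finset.range (N+1) := by
    intro k hk
    simp only [Finset.mem_image, Finset.mem_range] at hk ⊢
    obtain ⟨s, _, rfl⟩ := hk
    have h1 : (kf s : ℝ) ≤ 2*(N:ℝ) * dz (y + s/N) :=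
      Nat.floor_le (by have := dz_nonneg (y + s/N); positivity)
    have h2 := dz_le_half (y + s/N)
    have h3 : (kf s : ℝ) ≤ (N:ℝ) := by nlinarith
    have : kf s ≤ N := by exact_mod_cast h3
    omega
  have step2 : ∑ k ∈ (Finset.range N).image kf,
        ((Finset.range N).filter (fun s => kf s = k)).card • h k
      ≤ ∑ k ∈ (Finset.range N).image kf, 2 * h k := by
    refine Finset.sum_le_sum fun k _ => ?_
    rw [nsmul_eq_mul]
    have hfe : Finset.filter (fun s => kf s = k) (Finset.range N)
        = Finset.filter (fun s : ℕ => ⌊2*(N:ℝ) * dz (y + s/N)⌋₊ = k) (Finset.range N) :=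
      Finset.filter_congr (fun x _ => by rw [hkf])
    have h9 := fiber_card N hN1 y k
    have hcard : (((Finset.range N).filter (fun s => kf s = k)).card : ℝ) ≤ 2 := by
      rw [hfe]
      exact_mod_cast h9
    exact mul_le_mul_of_nonneg_right hcard (hnonneg k)
  have step3 : ∑ k ∈ (Finset.range N).image kf, 2 * h k
      ≤ ∑ k ∈ Finset.range (N+1), 2 * h k := by
    refine Finset.sum_le_sum_of_subset_of_nonneg himg fun k _ _ => ?_
    have := hnonneg k
    positivity
  have step4 : ∑ k ∈ Finset.range (N+1), 2 * h k ≤ 20 * (M:ℝ)^2 := by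
    rw [Finset.sum_range_succ']
    have hterm : ∀ k ∈ Finset.range N, 2 * h (k+1) = 2*(N:ℝ)^2 * (1/((k:ℝ)+1)^2) := by
      intro k _
      rw [hh]
      simp only [Nat.succ_ne_zero, if_false]
      push_cast
      ring
    rw [Finset.sum_congr rfl hterm]
    rw [← Finset.mul_sum]
    have hbasel := sum_inv_sq N
    have hN2R : (N:ℝ) ≤ 2*(M:ℝ) := by exact_mod_cast hN2
    have h0 : h 0 = 2*(M:ℝ)^2 := by simp [hh]
    rw [h0]
    have : 2*(N:ℝ)^2 * (∑ k ∈ Finset.range N, (1:ℝ)/((k:ℝ)+1)^2) ≤ 2*(N:ℝ)^2 * 2 := by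
      apply mul_le_mul_of_nonneg_left hbasel (by positivity)
    nlinarith
  calc ∑ s ∈ Finset.range N, ‖KK M (y + s/N)‖ ≤ ∑ s ∈ Finset.range N, h (kf s) := hsum
    _ = _ := hcomp
    _ ≤ _ := step2
    _ ≤ _ := step3
    _ ≤ 20 * (M:ℝ)^2 := step4

lemma grid_sum' (M N : ℕ) (hM : 1 ≤ M) (hN1 : 1 ≤ N) (hN2 : N ≤ 2*M) (c : ℝ) :
    ∑ s ∈ Finset.range N, ‖KK M (c - s/N)‖ ≤ 20 * (M:ℝ)^2 := by
  have hNR : (0:ℝ) < N := by exact_mod_cast hN1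
  set y : ℝ := c - ((N:ℝ)-1)/N with hy
  have hre := Finset.sum_range_reflect (fun s => ‖KK M (y + s/N)‖) N
  have heq : ∀ j ∈ Finset.range N, ‖KK M (y + ((N - 1 - j : ℕ):ℝ)/N)‖ = ‖KK M (c - j/N)‖ := by
    intro j hj
    simp only [Finset.mem_range] at hj
    congr 2
    have hc1 : ((N - 1 - j : ℕ) : ℝ) = (N:ℝ) - 1 - j := by
      have h1 : j ≤ N - 1 := by omega
      have h2 : 1 ≤ N := hN1
      push_cast [Nat.cast_sub h1, Nat.cast_sub h2]
      ring
    rw [hy, hc1]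
    field_simp
    ring
  calc ∑ s ∈ Finset.range N, ‖KK M (c - s/N)‖
      = ∑ s ∈ Finset.range N, ‖KK M (y + s/N)‖ := by
        rw [← hre]
        exact (Finset.sum_congr rfl heq).symm
    _ ≤ 20 * (M:ℝ)^2 := grid_sum M N hM hN1 hN2 y

lemma keyineq (M : ℕ) (hM : 1 ≤ M) (f : ℤ → ℂ)
    (hf : ∀ n ∉ Finset.Icc (1:ℤ) (M:ℤ), f n = 0) (p : ℝ) (hp : 1 ≤ p) (θ : ℝ) :
    ∑ r ∈ Finset.range M, ‖fourierZ f ((r:ℝ)/M)‖ ^ p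
      ≤ 10^p * ∑ s ∈ Finset.range (2*M), ‖fourierZ f (θ + s/(2*(M:ℝ)))‖ ^ p := by
  have hMR : (0:ℝ) < M := by exact_mod_cast hM
  set A : ℕ → ℝ := fun s => ‖fourierZ f (θ + s/(2*(M:ℝ)))‖ with hA
  have hAnn : ∀ s, 0 ≤ A s := fun s => norm_nonneg _
  set b : ℕ → ℕ → ℝ := fun r s => ‖KK M ((r:ℝ)/M - (θ + s/(2*(M:ℝ))))‖ / (2*(M:ℝ)^2)
    with hb
  have hbnn : ∀ r s, 0 ≤ b r s := fun r s => by
    rw [hb]; positivity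
  -- row sums of b bounded by 10
  have hrow : ∀ r : ℕ, ∑ s ∈ Finset.range (2*M), b r s ≤ 10 := by
    intro r
    rw [hb]
    rw [← Finset.sum_div]
    rw [div_le_iff₀ (by positivity : (0:ℝ) < 2*(M:ℝ)^2)]
    have h1 : ∀ s ∈ Finset.range (2*M),
        ‖KK M ((r:ℝ)/M - (θ + s/(2*(M:ℝ))))‖ = ‖KK M (((r:ℝ)/M - θ) - s/((2*M : ℕ):ℝ))‖ := by
      intro s _
      congr 2
      push_cast
      ring
    rw [Finset.sum_congr rfl h1]
    calc ∑ s ∈ Finset.range (2*M), ‖KK M (((r:ℝ)/M - θ) - s/((2*M:ℕ):ℝ))‖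
        ≤ 20 * (M:ℝ)^2 := grid_sum' M (2*M) hM (by omega) (by omega) _
      _ = 10 * (2*(M:ℝ)^2) := by ring
  -- column sums of b bounded by 10
  have hcol : ∀ s : ℕ, ∑ r ∈ Finset.range M, b r s ≤ 10 := by
    intro s
    rw [hb]
    rw [← Finset.sum_div]
    rw [div_le_iff₀ (by positivity : (0:ℝ) < 2*(M:ℝ)^2)]
    have h1 : ∀ r ∈ Finset.range M,
        ‖KK M ((r:ℝ)/M - (θ + s/(2*(M:ℝ))))‖ = ‖KK M ((-(θ + s/(2*(M:ℝ)))) + r/((M:ℕ):ℝ))‖ := by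
      intro r _
      congr 2
      push_cast
      ring
    rw [Finset.sum_congr rfl h1]
    calc ∑ r ∈ Finset.range M, ‖KK M ((-(θ + s/(2*(M:ℝ)))) + r/((M:ℕ):ℝ))‖
        ≤ 20 * (M:ℝ)^2 := grid_sum M M hM hM (by omega) _
      _ = 10 * (2*(M:ℝ)^2) := by ring
  -- pointwise bound
  have hFr : ∀ r : ℕ, ‖fourierZ f ((r:ℝ)/M)‖ ≤ ∑ s ∈ Finset.range (2*M), b r s * A s := by
    intro r
    have hs := sampling M hM f hf ((r:ℝ)/M) θ
    have hnorm : (2*(M:ℝ)^2) * ‖fourierZ f ((r:ℝ)/M)‖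
        = ‖∑ s ∈ Finset.range (2*M),
            fourierZ f (θ + s/(2*(M:ℝ))) * KK M ((r:ℝ)/M - (θ + s/(2*(M:ℝ))))‖ := by
      rw [← hs, norm_mul]
      congr 1
      rw [show (2 * (M:ℂ)^2) = ((2*(M:ℝ)^2 : ℝ) : ℂ) by push_cast; ring]
      rw [Complex.norm_real, Real.norm_eq_abs, abs_of_pos (by positivity)]
    have hle : ‖∑ s ∈ Finset.range (2*M),
          fourierZ f (θ + s/(2*(M:ℝ))) * KK M ((r:ℝ)/M - (θ + s/(2*(M:ℝ))))‖
        ≤ ∑ s ∈ Finset.range (2*M), A s * ‖KK M ((r:ℝ)/M - (θ + s/(2*(M:ℝ))))‖ := by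
      refine (norm_sum_le _ _).trans ?_
      refine Finset.sum_le_sum fun s _ => ?_
      rw [norm_mul]
    have : (2*(M:ℝ)^2) * ‖fourierZ f ((r:ℝ)/M)‖
        ≤ (2*(M:ℝ)^2) * ∑ s ∈ Finset.range (2*M), b r s * A s := by
      rw [hnorm]
      refine hle.trans (le_of_eq ?_)
      rw [Finset.mul_sum]
      refine Finset.sum_congr rfl fun s _ => ?_
      rw [hb]
      field_simp
    exact le_of_mul_le_mul_left this (by positivity)
  -- Jensen per r
  have hjen : ∀ r : ℕ, ‖fourierZ f ((r:ℝ)/M)‖ ^ p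
      ≤ 10^(p-1) * ∑ s ∈ Finset.range (2*M), b r s * A s ^ p := by
    intro r
    set T := ∑ s ∈ Finset.range (2*M), b r s with hT
    have hTnn : 0 ≤ T := Finset.sum_nonneg fun s _ => hbnn r s
    have hT10 : T ≤ 10 := hrow r
    have hsum_nn : 0 ≤ ∑ s ∈ Finset.range (2*M), b r s * A s ^ p :=
      Finset.sum_nonneg fun s _ => mul_nonneg (hbnn r s) (Real.rpow_nonneg (hAnn s) p)
    rcases eq_or_lt_of_le hTnn with hT0 | hT0
    · -- T = 0 : all b zero
      have hb0 : ∀ s ∈ Finset.range (2*M), b r s = 0 := by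
        intro s hs
        have := Finset.sum_eq_zero_iff_of_nonneg (fun s _ => hbnn r s) |>.1 hT0.symm
        exact this s hs
      have hF0 : ‖fourierZ f ((r:ℝ)/M)‖ = 0 := by
        have := hFr r
        have hz : ∑ s ∈ Finset.range (2*M), b r s * A s = 0 :=
          Finset.sum_eq_zero fun s hs => by rw [hb0 s hs, zero_mul]
        rw [hz] at this
        exact le_antisymm this (norm_nonneg _)
      rw [hF0, Real.zero_rpow (by linarith : p ≠ 0)]
      exact mul_nonneg (Real.rpow_nonneg (by norm_num) _) hsum_nn
    · -- T > 0
      have hw : ∀ s ∈ Finset.range (2*M), 0 ≤ b r s / T :=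
        fun s _ => div_nonneg (hbnn r s) hTnn
      have hw' : ∑ s ∈ Finset.range (2*M), b r s / T = 1 := by
        rw [← Finset.sum_div, ← hT, div_self (ne_of_gt hT0)]
      have hjensen := Real.rpow_arith_mean_le_arith_mean_rpow (Finset.range (2*M))
        (fun s => b r s / T) A hw hw' (fun s _ => hAnn s) hp
      have h2 : ‖fourierZ f ((r:ℝ)/M)‖ ^ p
          ≤ (∑ s ∈ Finset.range (2*M), b r s * A s) ^ p :=
        Real.rpow_le_rpow (norm_nonneg _) (hFr r) (by linarith)
      have h3 : (∑ s ∈ Finset.range (2*M), b r s * A s)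
          = T * ∑ s ∈ Finset.range (2*M), (b r s / T) * A s := by
        rw [Finset.mul_sum]
        refine Finset.sum_congr rfl fun s _ => ?_
        field_simp
      have h4 : (∑ s ∈ Finset.range (2*M), b r s * A s) ^ p
          ≤ T^p * ∑ s ∈ Finset.range (2*M), (b r s / T) * A s ^ p := by
        rw [h3, Real.mul_rpow hTnn (Finset.sum_nonneg fun s _ =>
          mul_nonneg (div_nonneg (hbnn r s) hTnn) (hAnn s))]
        exact mul_le_mul_of_nonneg_left hjensen (Real.rpow_nonneg hTnn p)
      have h5 : T^p * ∑ s ∈ Finset.range (2*M), (b r s / T) * A s ^ p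
          = T^(p-1) * ∑ s ∈ Finset.range (2*M), b r s * A s ^ p := by
        rw [Finset.mul_sum, Finset.mul_sum]
        refine Finset.sum_congr rfl fun s _ => ?_
        have e : T^p * T⁻¹ = T^(p-1) := by
          rw [Real.rpow_sub_one (ne_of_gt hT0), div_eq_mul_inv]
        rw [div_eq_mul_inv, show T^p * (b r s * T⁻¹ * A s ^ p)
          = (T^p * T⁻¹) * (b r s * A s ^ p) by ring, e]
      have h6 : T^(p-1) ≤ 10^(p-1) := Real.rpow_le_rpow hTnn hT10 (by linarith)
      calc ‖fourierZ f ((r:ℝ)/M)‖ ^ p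
          ≤ (∑ s ∈ Finset.range (2*M), b r s * A s) ^ p := h2
        _ ≤ T^p * ∑ s ∈ Finset.range (2*M), (b r s / T) * A s ^ p := h4
        _ = T^(p-1) * ∑ s ∈ Finset.range (2*M), b r s * A s ^ p := h5
        _ ≤ 10^(p-1) * ∑ s ∈ Finset.range (2*M), b r s * A s ^ p :=
            mul_le_mul_of_nonneg_right h6 hsum_nn
  -- sum over r
  have hApnn : ∀ s, 0 ≤ A s ^ p := fun s => Real.rpow_nonneg (hAnn s) p
  calc ∑ r ∈ Finset.range M, ‖fourierZ f ((r:ℝ)/M)‖ ^ p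
      ≤ ∑ r ∈ Finset.range M, 10^(p-1) * ∑ s ∈ Finset.range (2*M), b r s * A s ^ p :=
        Finset.sum_le_sum fun r _ => hjen r
    _ = 10^(p-1) * ∑ s ∈ Finset.range (2*M), A s ^ p * ∑ r ∈ Finset.range M, b r s := by
        rw [← Finset.mul_sum]
        congr 1
        rw [Finset.sum_comm]
        refine Finset.sum_congr rfl fun s _ => ?_
        rw [← Finset.sum_mul, mul_comm]
    _ ≤ 10^(p-1) * ∑ s ∈ Finset.range (2*M), A s ^ p * 10 := by
        refine mul_le_mul_of_nonneg_left (Finset.sum_le_sum fun s _ => ?_)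
          (Real.rpow_nonneg (by norm_num) _)
        exact mul_le_mul_of_nonneg_left (hcol s) (hApnn s)
    _ = 10^p * ∑ s ∈ Finset.range (2*M), A s ^ p := by
        rw [← Finset.sum_mul]
        rw [show (10:ℝ)^(p-1) * ((∑ s ∈ Finset.range (2*M), A s ^ p) * 10)
          = (10^(p-1) * 10) * ∑ s ∈ Finset.range (2*M), A s ^ p by ring]
        congr 1
        rw [Real.rpow_sub_one (by norm_num : (10:ℝ) ≠ 0)]
        field_simp

lemma contF (M : ℕ) (f : ℤ → ℂ)
    (hf : ∀ n ∉ Finset.Icc (1:ℤ) (M:ℤ), f n = 0) :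
    Continuous fun θ : ℝ => fourierZ f θ := by
  have he : (fun θ : ℝ => fourierZ f θ)
      = fun θ => ∑ n ∈ Finset.Icc (1:ℤ) (M:ℤ), f n * eC ((n:ℝ) * θ) :=
    funext (fourierZ_eq_sum M f hf)
  rw [he]
  refine continuous_finset_sum _ fun n _ => continuous_const.mul ?_
  unfold eC
  exact Complex.continuous_exp.comp (by continuity)

/-- One-dimensional Marcinkiewicz–Zygmund discretization lemma. -/
theorem marcinkiewicz_zygmund (p : ℝ) (hp : 1 ≤ p) :
    ∃ C : ℝ, 0 < C ∧ ∀ (M : ℕ), 1 ≤ M → ∀ f : ℤ → ℂ,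
      (∀ n : ℤ, n ∉ Finset.Icc (1 : ℤ) M → f n = 0) →
      ∑ r ∈ Finset.range M, ‖fourierZ f ((r : ℝ) / M)‖ ^ p ≤
        C * M * ∫ θ in (0:ℝ)..1, ‖fourierZ f θ‖ ^ p := by
  refine ⟨2 * 10^p, by positivity, ?_⟩
  intro M hM f hf
  have hMR : (0:ℝ) < M := by exact_mod_cast hM
  set G : ℝ → ℝ := fun θ => ‖fourierZ f θ‖ ^ p with hG
  have hGc : Continuous G := by
    rw [hG]
    exact ((contF M f hf).norm).rpow_const (fun x => Or.inr (by linarith))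
  have hGnn : ∀ θ, 0 ≤ G θ := fun θ => Real.rpow_nonneg (norm_nonneg _) p
  set δ : ℝ := 1/(2*(M:ℝ)) with hδdef
  have hδ : 0 < δ := by rw [hδdef]; positivity
  set L : ℝ := ∑ r ∈ Finset.range M, ‖fourierZ f ((r:ℝ)/M)‖ ^ p with hL
  have hint : ∀ s : ℕ, IntervalIntegrable (fun θ => G (θ + s/(2*(M:ℝ)))) MeasureTheory.volume 0 δ :=
    fun s => (hGc.comp (by continuity)).intervalIntegrable 0 δ
  have hRc : Continuous fun θ : ℝ => 10^p * ∑ s ∈ Finset.range (2*M), G (θ + s/(2*(M:ℝ))) := by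
    refine continuous_const.mul (continuous_finset_sum _ fun s _ => ?_)
    exact hGc.comp (by continuity)
  have h1 : δ * L ≤ ∫ θ in (0:ℝ)..δ, 10^p * ∑ s ∈ Finset.range (2*M), G (θ + s/(2*(M:ℝ))) := by
    have hLi : IntervalIntegrable (fun _ : ℝ => L) MeasureTheory.volume 0 δ :=
      intervalIntegrable_const
    have hRi : IntervalIntegrable
        (fun θ : ℝ => 10^p * ∑ s ∈ Finset.range (2*M), G (θ + s/(2*(M:ℝ))))
        MeasureTheory.volume 0 δ := hRc.intervalIntegrable 0 δ
    have hmono := intervalIntegral.integral_mono_on hδ.le hLi hRi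
      (fun θ _ => keyineq M hM f hf p hp θ)
    rw [intervalIntegral.integral_const, smul_eq_mul, sub_zero] at hmono
    exact hmono
  have h2 : ∫ θ in (0:ℝ)..δ, 10^p * ∑ s ∈ Finset.range (2*M), G (θ + s/(2*(M:ℝ)))
      = 10^p * ∑ s ∈ Finset.range (2*M), ∫ θ in (0:ℝ)..δ, G (θ + s/(2*(M:ℝ))) := by
    rw [intervalIntegral.integral_const_mul]
    congr 1
    exact intervalIntegral.integral_finset_sum (fun s _ => hint s)
  have h3 : ∀ s : ℕ, ∫ θ in (0:ℝ)..δ, G (θ + s/(2*(M:ℝ)))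
      = ∫ θ in ((s:ℝ)*δ)..(((s:ℕ)+1:ℕ):ℝ)*δ, G θ := by
    intro s
    have hsd : (s:ℝ)/(2*(M:ℝ)) = (s:ℝ)*δ := by rw [hδdef]; ring
    rw [hsd, intervalIntegral.integral_comp_add_right G ((s:ℝ)*δ)]
    congr 1
    · ring
    · push_cast
      ring
  have h4 : ∑ s ∈ Finset.range (2*M), ∫ θ in (0:ℝ)..δ, G (θ + s/(2*(M:ℝ)))
      = ∫ θ in (0:ℝ)..1, G θ := by
    have hadj := intervalIntegral.sum_integral_adjacent_intervals
      (μ := MeasureTheory.volume) (f := G) (a := fun k : ℕ => (k:ℝ)*δ) (n := 2*M)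
      (fun k _ => hGc.intervalIntegrable _ _)
    have e0 : ((0:ℕ):ℝ)*δ = 0 := by norm_num
    have e1 : ((2*M:ℕ):ℝ)*δ = 1 := by
      rw [hδdef]
      push_cast
      field_simp
    rw [e0, e1] at hadj
    rw [Finset.sum_congr rfl (fun s _ => h3 s)]
    exact hadj
  have hfinal : δ * L ≤ 10^p * ∫ θ in (0:ℝ)..1, G θ := by
    rw [← h4, ← h2]
    exact h1
  have h10p : (0:ℝ) < 10^p := Real.rpow_pos_of_pos (by norm_num) p
  have : L ≤ 2 * 10^p * (M:ℝ) * ∫ θ in (0:ℝ)..1, G θ := by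
    have hδval : δ = 1/(2*(M:ℝ)) := hδdef
    rw [hδval] at hfinal
    have h2M : (0:ℝ) < 2*(M:ℝ) := by positivity
    calc L = (1/(2*(M:ℝ)) * L) * (2*(M:ℝ)) := by field_simp
      _ ≤ (10^p * ∫ θ in (0:ℝ)..1, G θ) * (2*(M:ℝ)) :=
          mul_le_mul_of_nonneg_right hfinal h2M.le
      _ = 2 * 10^p * (M:ℝ) * ∫ θ in (0:ℝ)..1, G θ := by ring
  exact this
end
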